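/- Let S be a nontrivial subgroup of ℚ, let u, v ∈ ℕ, and let A be a u × v rational matrix that is weakly image partition regular over S and has linearly dependent rows. Then there exist j < u and a (j+u) × 3u rational matrix D that is kernel partition regular over S such that whenever s ∈ (S \ {0})^{3u} and D s = 0, there exists y ∈ S^v \ {0} such that every entry of A y is an entry of s. -/

import Mathlib

open scoped BigOperators

noncomputable def mulVecQ {u v : Type} (A : u → v → ℚ) (x : v → ℚ) : u → ℚ :=
  fun i => ∑ᶠ j, A i j * x j

def KPRQ {u v : Type} (M : u → v → ℚ) (T : Set ℚ) : Prop :=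
  ∀ (k : ℕ) (φ : ℚ → Fin k), ∃ x : v → ℚ,
    (∀ j, x j ∈ T \ {0}) ∧ (∀ i, mulVecQ M x i = 0) ∧
    (∀ j j', φ (x j) = φ (x j'))

def WIPRQ {u v : Type} (A : u → v → ℚ) (S : Set ℚ) : Prop :=
  ∀ (k : ℕ) (φ : ℚ → Fin k), ∃ x : v → ℚ,
    (∀ j, x j ∈ S) ∧ (∀ i, mulVecQ A x i ∈ S \ {0}) ∧
    (∀ i i', φ (mulVecQ A x i) = φ (mulVecQ A x i'))

private def E3 (u : ℕ) : (Fin u ⊕ (Fin u ⊕ Fin u)) ≃ Fin (3 * u) :=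
  ((Equiv.sumCongr (Equiv.refl (Fin u)) finSumFinEquiv).trans finSumFinEquiv).trans
    (finCongr (by omega))


private lemma ultra_exists_color {K : ℕ} (U : Ultrafilter ℕ) (g : ℕ → Fin K) :
    ∃ c, {R | g R = c} ∈ U := by
  by_contra h
  push_neg at h
  have h2 : ∀ c : Fin K, {R | g R = c}ᶜ ∈ U := fun c =>
    Ultrafilter.compl_mem_iff_notMem.mpr (h c)
  have h3 : (⋂ c : Fin K, {R | g R = c}ᶜ) ∈ U := Filter.iInter_mem.mpr h2
  have h4 : (⋂ c : Fin K, {R | g R = c}ᶜ) = ∅ := by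
    apply Set.eq_empty_iff_forall_notMem.mpr
    intro R hR
    exact (Set.mem_iInter.mp hR (g R)) rfl
  rw [h4] at h3
  exact (Filter.empty_notMem (U : Filter ℕ)) h3

private lemma triple_compact (N K : ℕ)
    (H : ∀ χ : ℕ → Fin K, ∃ α δ : ℕ, 1 ≤ α ∧ 1 ≤ δ ∧ χ α = χ (α + δ) ∧ χ α = χ (N * δ)) :
    ∃ R : ℕ, 1 ≤ R ∧ ∀ χ : ℕ → Fin K, ∃ α δ : ℕ, 1 ≤ α ∧ 1 ≤ δ ∧ α + δ ≤ R ∧ N * δ ≤ R ∧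
      χ α = χ (α + δ) ∧ χ α = χ (N * δ) := by
  classical
  rcases Nat.eq_zero_or_pos K with hK | hK
  · subst hK
    exact ⟨1, le_refl 1, fun χ => (χ 0).elim0⟩
  by_contra hcon
  push_neg at hcon
  -- hcon : ∀ R, 1 ≤ R → ∃ χ, ∀ α δ, ...
  have hcon' : ∀ R : ℕ, ∃ χ : ℕ → Fin K, ∀ α δ : ℕ, 1 ≤ α → 1 ≤ δ → α + δ ≤ R → N * δ ≤ R →
      χ α = χ (α + δ) → χ α ≠ χ (N * δ) := by
    intro R
    rcases Nat.eq_zero_or_pos R with hR | hR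
    · exact ⟨fun _ => ⟨0, hK⟩, fun α δ h1 h2 h3 _ _ => by omega⟩
    · obtain ⟨χ, hχ⟩ := hcon R hR
      exact ⟨χ, hχ⟩
  choose g hg using hcon'
  set U : Ultrafilter ℕ := Filter.hyperfilter ℕ with hU
  have hcolor : ∀ n : ℕ, ∃ c, {R | g R n = c} ∈ U := fun n =>
    ultra_exists_color U (fun R => g R n)
  choose χs hχs using hcolor
  obtain ⟨α, δ, h1, h2, e1, e2⟩ := H χs
  have hT : ({R | g R α = χs α} ∩ {R | g R (α + δ) = χs (α + δ)} ∩ {R | g R (N * δ) = χs (N * δ)}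
      ∩ {R | α + δ ≤ R ∧ N * δ ≤ R}) ∈ U := by
    refine Filter.inter_mem (Filter.inter_mem (Filter.inter_mem ?_ ?_) ?_) ?_
    · exact hχs α
    · exact hχs (α + δ)
    · exact hχs (N * δ)
    · apply Filter.mem_hyperfilter_of_finite_compl
      have : {R | α + δ ≤ R ∧ N * δ ≤ R}ᶜ ⊆ {R | R < α + δ + N * δ} := by
        intro R hR
        simp only [Set.mem_compl_iff, Set.mem_setOf_eq, not_and_or, not_le] at hR
        simp only [Set.mem_setOf_eq]
        omega
      exact Set.Finite.subset (Set.finite_Iio _) this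
  obtain ⟨R, hR⟩ := Ultrafilter.nonempty_of_mem hT
  obtain ⟨⟨⟨hRa, hRb⟩, hRc⟩, hRd1, hRd2⟩ := hR
  refine hg R α δ h1 h2 hRd1 hRd2 ?_ ?_
  · rw [Set.mem_setOf_eq] at hRa hRb
    rw [hRa, hRb, ← e1]
  · rw [Set.mem_setOf_eq] at hRa hRc
    rw [hRa, hRc, ← e2]

private lemma triple_fin (N : ℕ) (hN : 1 ≤ N) :
    ∀ K : ℕ, ∃ R : ℕ, 1 ≤ R ∧ ∀ χ : ℕ → Fin K, ∃ α δ : ℕ, 1 ≤ α ∧ 1 ≤ δ ∧ α + δ ≤ R ∧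
      N * δ ≤ R ∧ χ α = χ (α + δ) ∧ χ α = χ (N * δ) := by
  intro K
  induction K with
  | zero => exact ⟨1, le_refl 1, fun χ => (χ 0).elim0⟩
  | succ K ih =>
    apply triple_compact
    intro χ
    classical
    obtain ⟨R₀, hR₀1, hR₀⟩ := ih
    obtain ⟨ℓ, hℓ, b, c0, hmono⟩ :=
      Combinatorics.exists_mono_homothetic_copy (Finset.range (N * R₀ + R₀ + 2)) χ
    by_cases hj : ∃ jj : ℕ, 1 ≤ jj ∧ jj ≤ R₀ ∧ χ (N * (ℓ * jj)) = c0
    · obtain ⟨jj, hj1, hj2, hj3⟩ := hj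
      refine ⟨ℓ + b, ℓ * jj, by omega, Nat.one_le_iff_ne_zero.mpr (by simp only [ne_eq, Nat.mul_eq_zero, not_or]; omega), ?_, ?_⟩
      · have ha : χ (ℓ + b) = c0 := by
          have := hmono 1 (by simp only [Finset.mem_range]; omega)
          simpa using this
        have hb : χ (ℓ + b + ℓ * jj) = c0 := by
          have := hmono (1 + jj) (by simp only [Finset.mem_range]; omega)
          rw [smul_eq_mul] at this
          have harg : ℓ * (1 + jj) + b = ℓ + b + ℓ * jj := by ring
          rw [harg] at this
          exact this
        rw [ha, hb]
      · have ha : χ (ℓ + b) = c0 := by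
          have := hmono 1 (by simp only [Finset.mem_range]; omega)
          simpa using this
        rw [ha, hj3]
    · push_neg at hj
      have hx1 : χ (N * (ℓ * 1)) ≠ c0 := hj 1 (le_refl 1) hR₀1
      obtain ⟨y₀, hy₀⟩ := Fin.exists_succAbove_eq hx1
      haveI : Nonempty (Fin K) := ⟨y₀⟩
      set χ' : ℕ → Fin K := fun n => Function.invFun (c0.succAbove) (χ (N * (ℓ * n))) with hχ'
      have key : ∀ n, 1 ≤ n → n ≤ R₀ → c0.succAbove (χ' n) = χ (N * (ℓ * n)) := by
        intro n hn1 hn2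
        exact Function.invFun_eq (Fin.exists_succAbove_eq (hj n hn1 hn2))
      obtain ⟨α', δ', ha1, ha2, ha3, ha4, he1, he2⟩ := hR₀ χ'
      have hα'R : α' ≤ R₀ := by omega
      have hNδ'1 : 1 ≤ N * δ' := Nat.one_le_iff_ne_zero.mpr (by simp only [ne_eq, Nat.mul_eq_zero, not_or]; omega)
      have k1 := key α' ha1 hα'R
      have k2 := key (α' + δ') (by omega) ha3
      have k3 := key (N * δ') hNδ'1 ha4
      refine ⟨N * (ℓ * α'), N * (ℓ * δ'), Nat.one_le_iff_ne_zero.mpr (by simp only [ne_eq, Nat.mul_eq_zero, not_or]; omega), Nat.one_le_iff_ne_zero.mpr (by simp only [ne_eq, Nat.mul_eq_zero, not_or]; omega), ?_, ?_⟩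
      · have harg : N * (ℓ * α') + N * (ℓ * δ') = N * (ℓ * (α' + δ')) := by ring
        rw [harg, ← k1, ← k2, he1]
      · have harg : N * (N * (ℓ * δ')) = N * (ℓ * (N * δ')) := by ring
        rw [harg, ← k1, ← k3, he2]

theorem stmt12 (S : AddSubgroup ℚ) (hS : ∃ s ∈ S, s ≠ (0 : ℚ))
    (u v : ℕ) (A : Fin u → Fin v → ℚ)
    (hwipr : WIPRQ A (S : Set ℚ))
    (hdep : ¬ LinearIndependent ℚ A) :
    ∃ j : ℕ, j < u ∧ ∃ D : Fin (j + u) → Fin (3 * u) → ℚ,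
      KPRQ D (S : Set ℚ) ∧
      ∀ s : Fin (3 * u) → ℚ,
        (∀ p, s p ∈ (S : Set ℚ) \ {0}) → (∀ r, mulVecQ D s r = 0) →
        ∃ y : Fin v → ℚ, (∀ i, y i ∈ (S : Set ℚ)) ∧ y ≠ 0 ∧
          ∀ i : Fin u, ∃ p, mulVecQ A y i = s p := by
  have hu : 0 < u := by
    rcases Nat.eq_zero_or_pos u with h0 | h
    · subst h0
      exact absurd linearIndependent_empty_type hdep
    · exact h

  classical
  set Am : Matrix (Fin u) (Fin v) ℚ := Matrix.of A with hAm
  set Alin : (Fin v → ℚ) →ₗ[ℚ] (Fin u → ℚ) := Am.mulVecLin with hAlin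
  have hmul : ∀ x : Fin v → ℚ, mulVecQ A x = Alin x := by
    intro x; funext i
    show (∑ᶠ j, A i j * x j) = _
    rw [finsum_eq_sum_of_fintype]
    simp [hAlin, hAm, Matrix.mulVecLin_apply, Matrix.mulVec, dotProduct]
  set W : Submodule ℚ (Fin u → ℚ) := LinearMap.range Alin with hW
  set m : ℕ := Module.finrank ℚ ((Fin u → ℚ) ⧸ W) with hmdef
  set β : Module.Basis (Fin m) ℚ ((Fin u → ℚ) ⧸ W) := Module.finBasis ℚ _ with hβ
  set Cfun : Fin m → ((Fin u → ℚ) →ₗ[ℚ] ℚ) := fun ρ => (β.coord ρ).comp W.mkQ with hCfun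
  have hCker : ∀ z : Fin u → ℚ, (∀ ρ, Cfun ρ z = 0) ↔ z ∈ W := by
    intro z
    constructor
    · intro h
      have h0 : β.repr (W.mkQ z) = 0 := by
        ext ρ
        exact h ρ
      have : W.mkQ z = 0 := (LinearEquiv.map_eq_zero_iff β.repr).mp h0
      rw [Submodule.mkQ_apply] at this
      exact (Submodule.Quotient.mk_eq_zero W).mp this
    · intro hz ρ
      have : W.mkQ z = 0 := by
        rw [Submodule.mkQ_apply]
        exact (Submodule.Quotient.mk_eq_zero W).mpr hz
      simp [hCfun, this]
  set Cmat : Fin m → Fin u → ℚ := fun ρ i => Cfun ρ (fun j => if i = j then 1 else 0) with hCmat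
  have hCsum : ∀ ρ (z : Fin u → ℚ), ∑ i, Cmat ρ i * z i = Cfun ρ z := by
    intro ρ z
    rw [LinearMap.pi_apply_eq_sum_univ (Cfun ρ) z]
    exact Finset.sum_congr rfl (fun i _ => by rw [smul_eq_mul, mul_comm])
  -- section
  obtain ⟨gsec, hgsec⟩ := Alin.rangeRestrict.exists_rightInverse_of_surjective
    (LinearMap.range_rangeRestrict Alin)
  obtain ⟨W', hcompl⟩ := Submodule.exists_isCompl W
  set P := Submodule.linearProjOfIsCompl W W' hcompl with hP
  set Bsec : (Fin u → ℚ) →ₗ[ℚ] (Fin v → ℚ) := gsec.comp P with hBsec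
  have hsec : ∀ z, z ∈ W → Alin (Bsec z) = z := by
    intro z hz
    have h1 : P z = ⟨z, hz⟩ := Submodule.linearProjOfIsCompl_apply_left hcompl ⟨z, hz⟩
    have h2 : Alin.rangeRestrict (gsec ⟨z, hz⟩) = ⟨z, hz⟩ := by
      have := LinearMap.ext_iff.mp hgsec ⟨z, hz⟩
      exact this
    have h3 : Alin (gsec ⟨z, hz⟩) = z := by
      have := congrArg (Subtype.val) h2
      simpa using this
    rw [hBsec]
    simp only [LinearMap.comp_apply, h1]
    exact h3
  set Bmat : Fin v → Fin u → ℚ := fun l i => Bsec (fun j => if i = j then 1 else 0) l with hBmat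
  have hBsum : ∀ (z : Fin u → ℚ) l, Bsec z l = ∑ i, z i * Bmat l i := by
    intro z l
    rw [LinearMap.pi_apply_eq_sum_univ Bsec z]
    rw [Finset.sum_apply]
    exact Finset.sum_congr rfl (fun i _ => by simp [hBmat, smul_eq_mul])

  -- m < u
  obtain ⟨x₀, hx₀S, hx₀im, -⟩ := hwipr 1 (fun _ => 0)
  have hX0W : Alin x₀ ∈ W := ⟨x₀, rfl⟩
  have hX0ne : Alin x₀ ⟨0, hu⟩ ≠ 0 := by
    have h2 := (hx₀im ⟨0, hu⟩).2
    rw [hmul x₀] at h2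
    simpa using h2
  haveI : Nontrivial W := by
    refine ⟨⟨Alin x₀, hX0W⟩, 0, ?_⟩
    intro h
    apply hX0ne
    have h3 := congrArg Subtype.val h
    simpa using congrFun h3 ⟨0, hu⟩
  have hmlt : m < u := by
    have h1 := Submodule.finrank_quotient_add_finrank W
    have h2 : Module.finrank ℚ (Fin u → ℚ) = u := by simp [Module.finrank_pi]
    have h3 : 0 < Module.finrank ℚ W := Module.finrank_pos
    rw [h2] at h1
    omega

  -- N
  set N : ℕ := ∏ l : Fin v, ∏ i : Fin u, (Bmat l i).den with hNdef
  have hN : 1 ≤ N := Nat.one_le_iff_ne_zero.mpr <| by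
    rw [hNdef]
    refine Finset.prod_ne_zero_iff.mpr (fun l _ => Finset.prod_ne_zero_iff.mpr (fun i _ => ?_))
    exact (Bmat l i).den_nz
  have hNB : ∀ l i, ∃ z : ℤ, ((N : ℚ) * Bmat l i) = (z : ℚ) := by
    intro l i
    have hdvd : (Bmat l i).den ∣ N := by
      calc (Bmat l i).den ∣ ∏ i' : Fin u, (Bmat l i').den :=
            Finset.dvd_prod_of_mem _ (Finset.mem_univ i)
        _ ∣ N := by rw [hNdef]; exact Finset.dvd_prod_of_mem _ (Finset.mem_univ l)
    obtain ⟨t, ht⟩ := hdvd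
    refine ⟨(t : ℤ) * (Bmat l i).num, ?_⟩
    have hq : ((Bmat l i).den : ℚ) * Bmat l i = ((Bmat l i).num : ℚ) := by
      rw [mul_comm]
      exact_mod_cast Rat.mul_den_eq_num (Bmat l i)
    rw [ht]
    push_cast
    rw [mul_comm ((Bmat l i).den : ℚ) (t : ℚ), mul_assoc, hq]
  choose zB hzB using hNB
  -- D
  set Drow : (Fin m ⊕ Fin u) → (Fin u ⊕ (Fin u ⊕ Fin u)) → ℚ := fun r c =>
    match r, c with
    | Sum.inl ρ, Sum.inr (Sum.inr i) => Cmat ρ i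
    | Sum.inl _, Sum.inl _ => 0
    | Sum.inl _, Sum.inr (Sum.inl _) => 0
    | Sum.inr i, Sum.inl i' => if i' = i then (N : ℚ) else 0
    | Sum.inr i, Sum.inr (Sum.inl i') => if i' = i then -(N : ℚ) else 0
    | Sum.inr i, Sum.inr (Sum.inr i') => if i' = i then 1 else 0
    with hDrow
  set D : Fin (m + u) → Fin (3 * u) → ℚ :=
    fun r p => Drow (finSumFinEquiv.symm r) ((E3 u).symm p) with hD
  have hsplit : ∀ (s : Fin (3 * u) → ℚ) (r : Fin (m + u)),
      mulVecQ D s r = ∑ c : Fin u ⊕ (Fin u ⊕ Fin u),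
        Drow (finSumFinEquiv.symm r) c * s (E3 u c) := by
    intro s r
    show (∑ᶠ p, D r p * s p) = _
    rw [finsum_eq_sum_of_fintype]
    rw [← Equiv.sum_comp (E3 u) (fun p => D r p * s p)]
    refine Finset.sum_congr rfl (fun c _ => ?_)
    rw [hD]
    simp only [Equiv.symm_apply_apply]
  have hrow1 : ∀ (s : Fin (3 * u) → ℚ) (ρ : Fin m),
      mulVecQ D s (finSumFinEquiv (Sum.inl ρ)) =
        ∑ i, Cmat ρ i * s (E3 u (Sum.inr (Sum.inr i))) := by
    intro s ρ
    rw [hsplit]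
    rw [Equiv.symm_apply_apply]
    rw [Fintype.sum_sum_type]
    rw [Fintype.sum_sum_type]
    simp only [hDrow, zero_mul, Finset.sum_const_zero, zero_add]
  have hrow2 : ∀ (s : Fin (3 * u) → ℚ) (i : Fin u),
      mulVecQ D s (finSumFinEquiv (Sum.inr i)) =
        (N : ℚ) * s (E3 u (Sum.inl i)) - (N : ℚ) * s (E3 u (Sum.inr (Sum.inl i)))
          + s (E3 u (Sum.inr (Sum.inr i))) := by
    intro s i
    rw [hsplit]
    rw [Equiv.symm_apply_apply]
    rw [Fintype.sum_sum_type]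
    rw [Fintype.sum_sum_type]
    simp only [hDrow, ite_mul, zero_mul, neg_mul, one_mul]
    rw [Finset.sum_ite_eq' Finset.univ i (fun i' => (N : ℚ) * s (E3 u (Sum.inl i')))]
    rw [Finset.sum_ite_eq' Finset.univ i (fun i' => -((N : ℚ) * s (E3 u (Sum.inr (Sum.inl i')))))]
    rw [Finset.sum_ite_eq' Finset.univ i (fun i' => s (E3 u (Sum.inr (Sum.inr i'))))]
    simp only [Finset.mem_univ, if_true]
    ring

  -- transfer
  have htrans : ∀ s : Fin (3 * u) → ℚ,
      (∀ p, s p ∈ (S : Set ℚ) \ {0}) → (∀ r, mulVecQ D s r = 0) →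
      ∃ y : Fin v → ℚ, (∀ l, y l ∈ (S : Set ℚ)) ∧ y ≠ 0 ∧
        ∀ i : Fin u, ∃ p, mulVecQ A y i = s p := by
    intro s hsS hker
    set Xb : Fin u → ℚ := fun i => s (E3 u (Sum.inl i)) with hXb
    set Xb' : Fin u → ℚ := fun i => s (E3 u (Sum.inr (Sum.inl i))) with hXb'
    set Zb : Fin u → ℚ := fun i => s (E3 u (Sum.inr (Sum.inr i))) with hZb
    have hZrel : ∀ i, Zb i = (N : ℚ) * (Xb' i - Xb i) := by
      intro i
      have h0 := hker (finSumFinEquiv (Sum.inr i))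
      rw [hrow2 s i] at h0
      simp only [hXb, hXb', hZb]
      linarith
    have hZW : Zb ∈ W := by
      rw [← hCker]
      intro ρ
      have h0 := hker (finSumFinEquiv (Sum.inl ρ))
      rw [hrow1 s ρ] at h0
      rw [← hCsum]
      exact h0
    set y : Fin v → ℚ := fun l => ∑ i, (zB l i : ℚ) * (Xb' i - Xb i) with hy
    have hyS : ∀ l, y l ∈ (S : Set ℚ) := by
      intro l
      rw [hy]
      apply AddSubgroup.sum_mem
      intro i _
      rw [← zsmul_eq_mul]
      apply AddSubgroup.zsmul_mem
      exact AddSubgroup.sub_mem _ (hsS _).1 (hsS _).1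
    have hyB : y = Bsec Zb := by
      funext l
      rw [hy, hBsum Zb l]
      refine Finset.sum_congr rfl (fun i _ => ?_)
      rw [← hzB l i, hZrel i]
      ring
    have hAy : ∀ i, mulVecQ A y i = Zb i := by
      intro i
      have : mulVecQ A y = Zb := by
        rw [hmul, hyB, hsec Zb hZW]
      rw [this]
    have hyne : y ≠ 0 := by
      intro h0
      have h1 : Zb ⟨0, hu⟩ = 0 := by
        rw [← hAy ⟨0, hu⟩, h0, hmul]
        simp
      exact ((hsS (E3 u (Sum.inr (Sum.inr ⟨0, hu⟩)))).2) h1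
    exact ⟨y, hyS, hyne, fun i => ⟨E3 u (Sum.inr (Sum.inr i)), hAy i⟩⟩

  -- KPR
  have hKPR : KPRQ D (S : Set ℚ) := by
    intro k φ
    obtain ⟨R, hR1, hRtriple⟩ := triple_fin N hN k
    set eqv := Fintype.equivFin (Fin R → Fin k) with heqv
    set Φ : ℚ → Fin (Fintype.card (Fin R → Fin k)) :=
      fun q => eqv (fun μ => φ ((((μ : ℕ) + 1 : ℕ) : ℚ) * q)) with hΦ
    obtain ⟨x, hxS, hxim, hxmono⟩ := hwipr _ Φ
    set Xh : Fin u → ℚ := fun i => mulVecQ A x i with hXh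
    have hXhW : Xh ∈ W := by
      have hXA : Xh = Alin x := funext fun i => congrFun (hmul x) i
      rw [hXA]
      exact ⟨x, rfl⟩
    have hcross : ∀ n : ℕ, 1 ≤ n → n ≤ R → ∀ i i' : Fin u,
        φ ((n : ℚ) * Xh i) = φ ((n : ℚ) * Xh i') := by
      intro n h1 h2 i i'
      have h3 := eqv.injective (hxmono i i')
      have h4 := congrFun h3 ⟨n - 1, by omega⟩
      simpa [Nat.sub_add_cancel h1] using h4
    set χ : ℕ → Fin k := fun n => φ ((n : ℚ) * Xh ⟨0, hu⟩) with hχ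
    obtain ⟨α, δ, hα1, hδ1, hαδR, hNδR, heq1, heq2⟩ := hRtriple χ
    have hαR : α ≤ R := by omega
    have hNδ1 : 1 ≤ N * δ := Nat.one_le_iff_ne_zero.mpr
      (by simp only [ne_eq, Nat.mul_eq_zero, not_or]; omega)
    set Sval : (Fin u ⊕ (Fin u ⊕ Fin u)) → ℚ := fun c =>
      match c with
      | Sum.inl i => ((α : ℕ) : ℚ) * Xh i
      | Sum.inr (Sum.inl i) => ((α + δ : ℕ) : ℚ) * Xh i
      | Sum.inr (Sum.inr i) => ((N * δ : ℕ) : ℚ) * Xh i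
      with hSval
    set sw : Fin (3 * u) → ℚ := fun p => Sval ((E3 u).symm p) with hsw
    have hsapp : ∀ c, sw (E3 u c) = Sval c := by
      intro c; rw [hsw]; simp only [Equiv.symm_apply_apply]
    have hgen : ∀ (n : ℕ), 1 ≤ n → ∀ i, ((n : ℚ) * Xh i) ∈ (S : Set ℚ) \ {0} := by
      intro n hn i
      constructor
      · have hXS : Xh i ∈ S := (hxim i).1
        have hnm : (n : ℚ) * Xh i = n • Xh i := by rw [nsmul_eq_mul]
        rw [hnm]
        exact AddSubgroup.nsmul_mem _ hXS n
      · simp only [Set.mem_singleton_iff]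
        apply mul_ne_zero
        · exact_mod_cast Nat.one_le_iff_ne_zero.mp hn
        · have h2 := (hxim i).2
          simpa using h2
    have hmem : ∀ c, Sval c ∈ (S : Set ℚ) \ {0} := by
      intro c
      rcases c with i | i | i
      · exact hgen α hα1 i
      · exact hgen (α + δ) (by omega) i
      · exact hgen (N * δ) hNδ1 i
    have hcolor : ∀ c, φ (Sval c) = χ α := by
      intro c
      rcases c with i | i | i
      · show φ (((α : ℕ) : ℚ) * Xh i) = χ α
        rw [hcross α hα1 hαR i ⟨0, hu⟩]
      · show φ (((α + δ : ℕ) : ℚ) * Xh i) = χ α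
        rw [hcross (α + δ) (by omega) hαδR i ⟨0, hu⟩]
        exact heq1.symm
      · show φ (((N * δ : ℕ) : ℚ) * Xh i) = χ α
        rw [hcross (N * δ) hNδ1 hNδR i ⟨0, hu⟩]
        exact heq2.symm
    refine ⟨sw, ?_, ?_, ?_⟩
    · intro p
      have : sw p = Sval ((E3 u).symm p) := by rw [hsw]
      rw [this]
      exact hmem _
    · intro r
      obtain ⟨rc, hrc⟩ : ∃ rc, finSumFinEquiv rc = r :=
        ⟨finSumFinEquiv.symm r, Equiv.apply_symm_apply _ _⟩
      rw [← hrc]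
      rcases rc with ρ | i
      · rw [hrow1]
        have hterm : ∀ i : Fin u, Cmat ρ i * sw (E3 u (Sum.inr (Sum.inr i)))
            = ((N * δ : ℕ) : ℚ) * (Cmat ρ i * Xh i) := by
          intro i
          rw [hsapp]
          show Cmat ρ i * (((N * δ : ℕ) : ℚ) * Xh i) = _
          ring
        rw [Finset.sum_congr rfl (fun i _ => hterm i), ← Finset.mul_sum, hCsum,
          (hCker Xh).mpr hXhW ρ, mul_zero]
      · rw [hrow2]
        rw [hsapp (Sum.inl i), hsapp (Sum.inr (Sum.inl i)), hsapp (Sum.inr (Sum.inr i))]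
        show (N : ℚ) * (((α : ℕ) : ℚ) * Xh i) - (N : ℚ) * (((α + δ : ℕ) : ℚ) * Xh i)
            + ((N * δ : ℕ) : ℚ) * Xh i = 0
        push_cast
        ring
    · intro p p'
      have e1 : sw p = Sval ((E3 u).symm p) := by rw [hsw]
      have e2 : sw p' = Sval ((E3 u).symm p') := by rw [hsw]
      rw [e1, e2, hcolor, hcolor]
  exact ⟨m, hmlt, D, hKPR, htrans⟩
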